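/- Let Ω ⊆ Q be a closed axis-parallel cube with positive volume. Then for all sufficiently large n, for every minimizer Y_n of the quantization energy among subsets of Q with n points, the total energy contribution of the Voronoi cells that do not intersect ∂Ω satisfies Σ_{y ∈ Y_n, V_y ∩ ∂Ω = ∅} ∫_{V_y} |x − y|² dx ≥ (π/5)·ω₃^{−5/3}·n^{−2/3} − (3Γ₄⁶/(4Γ₅³))·n^{−1}, where Γ₄ := (2·12^{1/4}·16^{1/3}/(π^{1/4}·ω₃^{1/12}))·(√(1 + 2⁴·3³/(5²·10³)) − 1)^{−1/2}·(5²·10³/(2²·3³))^{1/4}, Γ₅ := (1/4)·(√(1 + 2⁴·3³/(5²·10³)) − 1)·Γ₃, Γ₃ := ω₃^{−1/5}·Γ₁^{1/5}, Γ₁ := (2/5)^{2/3}/40. -/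

import Mathlib

open MeasureTheory

noncomputable section

/-- Euclidean 3-space. -/
abbrev E3 := EuclideanSpace ℝ (Fin 3)

/-- The closed unit cube Q = [0,1]³. -/
def Qcube : Set E3 := {x | ∀ i, x i ∈ Set.Icc (0 : ℝ) 1}

/-- The quantization energy E(Y) = ∫_Q dist(x,Y)² dx. -/
def quantE (Y : Finset E3) : ℝ := ∫ x in Qcube, (Metric.infDist x (↑Y : Set E3)) ^ 2

/-- The Voronoi cell of a generator y ∈ Y, relative to Q. -/
def vorCell (Y : Finset E3) (y : E3) : Set E3 :=
  {x ∈ Qcube | ∀ z ∈ Y, dist x y ≤ dist x z}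

/-- Y is a minimizer of the quantization energy among n-point subsets of Q. -/
def IsMinimizer (n : ℕ) (Y : Finset E3) : Prop :=
  (↑Y : Set E3) ⊆ Qcube ∧ Y.card = n ∧
    ∀ Z : Finset E3, (↑Z : Set E3) ⊆ Qcube → Z.card = n → quantE Y ≤ quantE Z

/-- ω₃ = 4π/3, the volume of the unit ball in ℝ³. -/
def omega3 : ℝ := 4 * Real.pi / 3

/-- Γ₁ = (2/5)^{2/3} / 40. -/
def Gamma1 : ℝ := ((2 / 5 : ℝ) ^ ((2 : ℝ) / 3)) / 40

/-- Γ₃ = ω₃^{-1/5} Γ₁^{1/5}. -/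
def Gamma3 : ℝ := omega3 ^ (-(1 : ℝ) / 5) * Gamma1 ^ ((1 : ℝ) / 5)

/-- Γ₅ = (1/4)(√(1 + 2⁴·3³/(5²·10³)) − 1) Γ₃. -/
def Gamma5 : ℝ :=
  (1 / 4) * (Real.sqrt (1 + (2 ^ 4 * 3 ^ 3 : ℝ) / (5 ^ 2 * 10 ^ 3)) - 1) * Gamma3

/-- Γ₄, the diameter upper-bound constant. -/
def Gamma4 : ℝ :=
  (2 * (12 : ℝ) ^ ((1 : ℝ) / 4) * (16 : ℝ) ^ ((1 : ℝ) / 3) /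
      (Real.pi ^ ((1 : ℝ) / 4) * omega3 ^ ((1 : ℝ) / 12))) *
    (Real.sqrt (1 + (2 ^ 4 * 3 ^ 3 : ℝ) / (5 ^ 2 * 10 ^ 3)) - 1) ^ (-(1 : ℝ) / 2) *
    ((5 ^ 2 * 10 ^ 3 : ℝ) / (2 ^ 2 * 3 ^ 3)) ^ ((1 : ℝ) / 4)

/-! ### Auxiliary geometry lemmas -/

lemma cont_coord (i : Fin 3) : Continuous fun x : E3 => x i :=
  (EuclideanSpace.proj (𝕜 := ℝ) i).continuous

lemma dist_sq_eq (x y : E3) : dist x y ^ 2 = ∑ i, (x i - y i) ^ 2 := by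
  rw [EuclideanSpace.dist_eq, Real.sq_sqrt (by positivity)]
  simp [Real.dist_eq, sq_abs]

lemma coord_le_dist (x y : E3) (i : Fin 3) : |x i - y i| ≤ dist x y := by
  have h1 : (x i - y i) ^ 2 ≤ dist x y ^ 2 := by
    rw [dist_sq_eq]
    exact Finset.single_le_sum (f := fun j => (x j - y j) ^ 2)
      (fun j _ => sq_nonneg _) (Finset.mem_univ i)
  calc |x i - y i| = Real.sqrt ((x i - y i) ^ 2) := (Real.sqrt_sq_eq_abs _).symm
    _ ≤ Real.sqrt (dist x y ^ 2) := Real.sqrt_le_sqrt h1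
    _ = dist x y := by rw [Real.sqrt_sq dist_nonneg]

lemma dist_le_of_coords {x y : E3} {s : ℝ} (hs : 0 ≤ s)
    (h : ∀ i, |x i - y i| ≤ s) : dist x y ≤ 2 * s := by
  have h1 : dist x y ^ 2 ≤ 3 * s ^ 2 := by
    rw [dist_sq_eq]
    calc ∑ i, (x i - y i) ^ 2 ≤ ∑ _i : Fin 3, s ^ 2 := by
          refine Finset.sum_le_sum fun i _ => ?_
          have := h i
          nlinarith [abs_nonneg (x i - y i), sq_abs (x i - y i)]
      _ = 3 * s ^ 2 := by
          rw [Finset.sum_const, Finset.card_univ, Fintype.card_fin]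
          ring
  nlinarith [dist_nonneg (x := x) (y := y)]

lemma volume_pi_set (I : Fin 3 → Set ℝ) (hI : ∀ i, MeasurableSet (I i)) :
    volume {x : E3 | ∀ i, x i ∈ I i} = ∏ i, volume (I i) := by
  have h : {x : E3 | ∀ i, x i ∈ I i}
      = (WithLp.ofLp (p := 2) : E3 → (Fin 3 → ℝ)) ⁻¹' (Set.univ.pi I) := by
    ext x
    simp [Set.mem_pi]
  rw [h, (PiLp.volume_preserving_ofLp (Fin 3)).measure_preimage
    (MeasurableSet.univ_pi hI).nullMeasurableSet]
  exact volume_pi_pi I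

lemma isClosed_pi_set (I : Fin 3 → Set ℝ) (hI : ∀ i, IsClosed (I i)) :
    IsClosed {x : E3 | ∀ i, x i ∈ I i} := by
  have : {x : E3 | ∀ i, x i ∈ I i} = ⋂ i, (fun x : E3 => x i) ⁻¹' (I i) := by
    ext x; simp
  rw [this]
  exact isClosed_iInter fun i => (hI i).preimage (cont_coord i)

lemma isClosed_Qcube : IsClosed Qcube := isClosed_pi_set _ fun _ => isClosed_Icc

lemma isCompact_Qcube : IsCompact Qcube := by
  have hb : Bornology.IsBounded Qcube := by
    have hsub : Qcube ⊆ Metric.closedBall 0 2 := by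
      intro x hx
      simp only [Metric.mem_closedBall]
      have h2 : ∀ i, |x i - (0 : E3) i| ≤ 1 := by
        intro i
        have h0 : (0 : E3) i = 0 := rfl
        rw [h0, sub_zero]
        rw [abs_le]
        exact ⟨by linarith [(hx i).1], (hx i).2⟩
      have := dist_le_of_coords (x := x) (y := 0) zero_le_one h2
      linarith
    exact Metric.isBounded_closedBall.subset hsub
  exact Metric.isCompact_of_isClosed_isBounded isClosed_Qcube hb

lemma measurableSet_Qcube : MeasurableSet Qcube := isClosed_Qcube.measurableSet

lemma volume_Qcube : volume Qcube = 1 := by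
  have : Qcube = {x : E3 | ∀ i, x i ∈ Set.Icc (0:ℝ) 1} := rfl
  rw [this, volume_pi_set _ fun _ => measurableSet_Icc]
  simp [Real.volume_Icc]

lemma isClosed_vorCell (Y : Finset E3) (y : E3) : IsClosed (vorCell Y y) := by
  have : vorCell Y y = Qcube ∩ ⋂ z ∈ Y, {x : E3 | dist x y ≤ dist x z} := by
    ext x; simp [vorCell]
  rw [this]
  refine isClosed_Qcube.inter (isClosed_biInter fun z _ => ?_)
  exact isClosed_le (Continuous.dist continuous_id continuous_const)
    (Continuous.dist continuous_id continuous_const)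

lemma vorCell_subset (Y : Finset E3) (y : E3) : vorCell Y y ⊆ Qcube := fun _ h => h.1

lemma measurableSet_vorCell (Y : Finset E3) (y : E3) : MeasurableSet (vorCell Y y) :=
  (isClosed_vorCell Y y).measurableSet

lemma isCompact_vorCell (Y : Finset E3) (y : E3) : IsCompact (vorCell Y y) :=
  isCompact_Qcube.of_isClosed_subset (isClosed_vorCell Y y) (vorCell_subset Y y)

lemma volume_vorCell_lt_top (Y : Finset E3) (y : E3) : volume (vorCell Y y) < ⊤ :=
  lt_of_le_of_lt (measure_mono (vorCell_subset Y y)) (by rw [volume_Qcube]; exact ENNReal.one_lt_top)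

lemma integrableOn_distsq (y : E3) {s : Set E3} (hs : MeasurableSet s) (hsub : s ⊆ Qcube) :
    IntegrableOn (fun x => dist x y ^ 2) s := by
  have h : IntegrableOn (fun x => dist x y ^ 2) Qcube :=
    (((Continuous.dist continuous_id continuous_const).pow 2).continuousOn).integrableOn_compact
      isCompact_Qcube
  exact h.mono_set hsub

lemma integrableOn_infDistsq (Y : Finset E3) {s : Set E3} (hs : s ⊆ Qcube) :
    IntegrableOn (fun x => Metric.infDist x (↑Y : Set E3) ^ 2) s := by
  have h : IntegrableOn (fun x => Metric.infDist x (↑Y : Set E3) ^ 2) Qcube :=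
    (((Metric.continuous_infDist_pt _).pow 2).continuousOn).integrableOn_compact isCompact_Qcube
  exact h.mono_set hs

open scoped Classical
set_option maxRecDepth 4000

/-! ### Grid competitor -/

lemma grid_coord_bound (m : ℕ) (hm : 0 < m) (t : ℝ) (ht : t ∈ Set.Icc (0:ℝ) 1) :
    ∃ k : ℕ, k < m ∧ |t - ((k : ℝ) + 1/2) / m| ≤ 1 / (2 * m) := by
  obtain ⟨ht0, ht1⟩ := ht
  have hm' : (0:ℝ) < m := by exact_mod_cast hm
  have key : ∀ c : ℝ, c ≤ t * m → t * m ≤ c + 1 → |t - (c + 1/2) / m| ≤ 1 / (2 * m) := by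
    intro c h1 h2
    have e : t - (c + 1/2)/m = (t * m - (c + 1/2))/m := by field_simp
    rw [abs_le]
    constructor
    · rw [e, le_div_iff₀ hm']
      have h3 : -(1 / (2 * (m:ℝ))) * m = -(1/2) := by field_simp
      rw [h3]; linarith
    · rw [e, div_le_iff₀ hm']
      have h3 : 1 / (2 * (m:ℝ)) * m = 1/2 := by field_simp
      rw [h3]; linarith
  by_cases hle : ⌊t * m⌋₊ ≤ m - 1
  · refine ⟨⌊t * m⌋₊, by omega, ?_⟩
    exact key _ (Nat.floor_le (by positivity)) (Nat.lt_floor_add_one _).le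
  · refine ⟨m - 1, by omega, ?_⟩
    have hmf : m ≤ ⌊t * m⌋₊ := by omega
    have h1 : (m : ℝ) ≤ t * m := by
      calc (m:ℝ) ≤ (⌊t * m⌋₊ : ℝ) := by exact_mod_cast hmf
        _ ≤ t * m := Nat.floor_le (by positivity)
    have hc : ((m - 1 : ℕ) : ℝ) = (m : ℝ) - 1 := by
      have h1' : (1:ℕ) ≤ m := hm
      push_cast [h1']; ring
    rw [hc]
    refine key _ (by nlinarith) (by nlinarith)

def gridPt (m : ℕ) (f : Fin 3 → Fin m) : E3 :=
  (EuclideanSpace.equiv (Fin 3) ℝ).symm (fun i => ((f i : ℝ) + 1/2) / m)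

lemma gridPt_apply (m : ℕ) (f : Fin 3 → Fin m) (i : Fin 3) :
    gridPt m f i = ((f i : ℝ) + 1/2) / m := rfl

lemma gridPt_mem (m : ℕ) (hm : 0 < m) (f : Fin 3 → Fin m) : gridPt m f ∈ Qcube := by
  intro i
  rw [gridPt_apply]
  have hm' : (0:ℝ) < m := by exact_mod_cast hm
  have hf : (f i : ℝ) + 1 ≤ m := by exact_mod_cast (f i).2
  constructor
  · positivity
  · rw [div_le_one hm']; linarith

lemma exists_competitor_gen (m : ℕ) (hm0 : 0 < m) {n : ℕ} (hn : m ^ 3 ≤ n) :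
    ∃ Z : Finset E3, ↑Z ⊆ Qcube ∧ Z.card = n ∧
      ∀ x ∈ Qcube, Metric.infDist x (↑Z : Set E3) ^ 2 ≤ 3 / (4 * (m:ℝ) ^ 2) := by
  set G : Finset E3 := Finset.univ.image (gridPt m) with hG
  have hGsub : ↑G ⊆ Qcube := by
    intro x hx
    simp only [hG, Finset.coe_image, Set.mem_image] at hx
    obtain ⟨f, _, rfl⟩ := hx
    exact gridPt_mem m hm0 f
  have hGcard : G.card ≤ m ^ 3 := by
    calc G.card ≤ (Finset.univ : Finset (Fin 3 → Fin m)).card := Finset.card_image_le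
      _ = m ^ 3 := by simp
  have hQinf : (Qcube \ ↑G).Infinite := by
    have hQi : Qcube.Infinite := by
      haveI : Infinite ↥(Set.Icc (0:ℝ) 1) :=
        Set.infinite_coe_iff.mpr (Set.Icc_infinite (by norm_num))
      have hsub : Set.range (fun t : Set.Icc (0:ℝ) 1 => ((EuclideanSpace.equiv (Fin 3) ℝ).symm
          (fun _ => (t : ℝ)) : E3)) ⊆ Qcube := by
        rintro x ⟨t, rfl⟩ i
        exact t.2
      refine Set.Infinite.mono hsub (Set.infinite_range_of_injective ?_)
      intro s t hst
      have h2 : (fun _ : Fin 3 => (s:ℝ)) = fun _ => (t:ℝ) :=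
        (EuclideanSpace.equiv (Fin 3) ℝ).symm.injective hst
      exact Subtype.ext (congrFun h2 0)
    exact hQi.diff (G.finite_toSet)
  obtain ⟨P, hPsub, hPcard⟩ := hQinf.exists_subset_card_eq (n - G.card)
  have hdisj : Disjoint G P := by
    rw [Finset.disjoint_right]
    intro p hp hpG
    exact (hPsub hp).2 (by exact_mod_cast hpG)
  refine ⟨G ∪ P, ?_, ?_, ?_⟩
  · intro x hx
    rcases Finset.mem_union.mp (by exact_mod_cast hx) with h | h
    · exact hGsub h
    · exact (hPsub h).1
  · rw [Finset.card_union_of_disjoint hdisj, hPcard]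
    have : G.card ≤ n := le_trans hGcard hn
    omega
  · intro x hx
    have hchoice : ∀ i : Fin 3, ∃ k : ℕ, k < m ∧ |x i - ((k:ℝ) + 1/2)/m| ≤ 1/(2*m) :=
      fun i => grid_coord_bound m hm0 (x i) (hx i)
    choose k hk hkd using hchoice
    set f : Fin 3 → Fin m := fun i => ⟨k i, hk i⟩ with hf
    have hmem : gridPt m f ∈ (↑(G ∪ P) : Set E3) := by
      simp only [Finset.coe_union, Set.mem_union, hG, Finset.coe_image]
      exact Or.inl ⟨f, by simp, rfl⟩
    have hdist : dist x (gridPt m f) ^ 2 ≤ 3 / (4 * (m:ℝ) ^ 2) := by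
      rw [dist_sq_eq]
      have hterm : ∀ i, (x i - gridPt m f i) ^ 2 ≤ ((1:ℝ)/(2*m))^2 := by
        intro i
        have h := hkd i
        rw [gridPt_apply]
        have hfi : (f i : ℝ) = k i := rfl
        rw [hfi]
        nlinarith [abs_nonneg (x i - ((k i:ℝ)+1/2)/m), sq_abs (x i - ((k i:ℝ)+1/2)/m)]
      calc ∑ i, (x i - gridPt m f i)^2 ≤ ∑ _i : Fin 3, ((1:ℝ)/(2*m))^2 :=
            Finset.sum_le_sum fun i _ => hterm i
        _ = 3 * ((1:ℝ)/(2*m))^2 := by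
            rw [Finset.sum_const, Finset.card_univ, Fintype.card_fin]; ring
        _ = 3 / (4 * (m:ℝ) ^ 2) := by
            have : (0:ℝ) < m := by exact_mod_cast hm0
            field_simp
            ring
    have hinf : Metric.infDist x (↑(G ∪ P) : Set E3) ≤ dist x (gridPt m f) :=
      Metric.infDist_le_dist_of_mem hmem
    have h0 : 0 ≤ Metric.infDist x (↑(G ∪ P) : Set E3) := Metric.infDist_nonneg
    nlinarith [dist_nonneg (x := x) (y := gridPt m f)]

lemma exists_competitor {n : ℕ} (hn : 10 ^ 24 ≤ n) :
    ∃ Z : Finset E3, ↑Z ⊆ Qcube ∧ Z.card = n ∧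
      ∀ x ∈ Qcube, Metric.infDist x (↑Z : Set E3) ^ 2 ≤ 3 / (4 * 10 ^ 16) := by
  obtain ⟨Z, h1, h2, h3⟩ := exists_competitor_gen (10 ^ 8) (by norm_num)
    (n := n) (by norm_num; exact hn)
  refine ⟨Z, h1, h2, fun x hx => le_trans (h3 x hx) (by norm_num)⟩

/-! ### Energy of minimizers is small; covering radius -/

lemma minimizer_energy_le {n : ℕ} {Y : Finset E3} (hY : IsMinimizer n Y)
    (hn : 10 ^ 24 ≤ n) : quantE Y ≤ 3 / (4 * 10 ^ 16) := by
  obtain ⟨Z, hZsub, hZcard, hZbound⟩ := exists_competitor hn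
  refine le_trans (hY.2.2 Z hZsub hZcard) ?_
  have h1 : quantE Z ≤ ∫ _x in Qcube, (3 / (4 * 10 ^ 16) : ℝ) := by
    refine setIntegral_mono_on (integrableOn_infDistsq Z subset_rfl) ?_ measurableSet_Qcube ?_
    · exact (integrableOn_const_iff enorm_ne_top).mpr (Or.inr (by rw [volume_Qcube]; exact ENNReal.one_lt_top))
    · exact hZbound
  rw [setIntegral_const] at h1
  rw [measureReal_def, volume_Qcube] at h1
  simpa using h1

lemma covering_radius {Y : Finset E3} (hYne : Y.Nonempty)
    (hE : quantE Y ≤ 3 / (4 * 10 ^ 16)) :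
    ∀ x ∈ Qcube, ∃ z ∈ Y, dist x z ≤ 1 / 240 := by
  by_contra hcon
  push_neg at hcon
  obtain ⟨x₀, hx₀Q, hx₀⟩ := hcon
  set s : ℝ := 1 / 960 with hs
  set α : Fin 3 → ℝ := fun i => if x₀ i + s ≤ 1 then x₀ i else x₀ i - s with hα
  have hαprop : ∀ i, 0 ≤ α i ∧ α i + s ≤ 1 ∧ α i ≤ x₀ i ∧ x₀ i ≤ α i + s := by
    intro i
    obtain ⟨h0, h1⟩ := hx₀Q i
    by_cases hc : x₀ i + s ≤ 1
    · simp only [hα, if_pos hc]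
      exact ⟨h0, hc, le_refl _, by norm_num [hs]⟩
    · simp only [hα, if_neg hc]
      push_neg at hc
      refine ⟨by norm_num [hs] at hc ⊢; linarith, by linarith, by norm_num [hs], by norm_num⟩
  set D : Set E3 := {x | ∀ i, x i ∈ Set.Icc (α i) (α i + s)} with hD
  have hDQ : D ⊆ Qcube := by
    intro x hx i
    obtain ⟨h0, h1, _, _⟩ := hαprop i
    obtain ⟨ha, hb⟩ := hx i
    exact ⟨by linarith, by linarith⟩
  have hDmeas : MeasurableSet D :=
    (isClosed_pi_set _ fun _ => isClosed_Icc).measurableSet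
  have hDvol : volume D = ENNReal.ofReal (s ^ 3) := by
    rw [hD, volume_pi_set _ fun _ => measurableSet_Icc]
    simp only [Real.volume_Icc, add_sub_cancel_left]
    rw [Finset.prod_const, Finset.card_univ, Fintype.card_fin,
      ← ENNReal.ofReal_pow (by norm_num [hs])]
  have hbound : ∀ w ∈ D, (1 / 480 : ℝ) ^ 2 ≤ Metric.infDist w (↑Y : Set E3) ^ 2 := by
    intro w hw
    have hdw : dist w x₀ ≤ 2 * s := by
      refine dist_le_of_coords (by norm_num [hs]) ?_
      intro i
      obtain ⟨_, _, h2, h3⟩ := hαprop i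
      obtain ⟨ha, hb⟩ := hw i
      rw [abs_le]
      constructor <;> linarith
    have hinf : (1 / 480 : ℝ) ≤ Metric.infDist w (↑Y : Set E3) := by
      rw [← not_lt]
      intro hlt
      obtain ⟨z, hz, hdz⟩ := (Metric.infDist_lt_iff (Finset.coe_nonempty.mpr hYne)).mp hlt
      have h1 : (1 / 240 : ℝ) < dist x₀ z := hx₀ z (by exact_mod_cast hz)
      have h2 : dist x₀ z ≤ dist x₀ w + dist w z := dist_triangle _ _ _
      have h3 : dist x₀ w = dist w x₀ := dist_comm _ _
      norm_num [hs] at hdw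
      linarith
    nlinarith [Metric.infDist_nonneg (x := w) (s := (↑Y : Set E3))]
  have hlow : (1 / 480 : ℝ) ^ 2 * s ^ 3 ≤ quantE Y := by
    have h1 : (1 / 480 : ℝ) ^ 2 * (volume D).toReal ≤ ∫ w in D, Metric.infDist w (↑Y : Set E3) ^ 2 :=
      setIntegral_ge_of_const_le_real hDmeas
        (by rw [hDvol]; exact ENNReal.ofReal_ne_top)
        hbound (integrableOn_infDistsq Y hDQ)
    have h2 : (volume D).toReal = s ^ 3 := by
      rw [hDvol, ENNReal.toReal_ofReal (by norm_num [hs])]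
    rw [h2] at h1
    refine le_trans h1 ?_
    refine setIntegral_mono_set (integrableOn_infDistsq Y subset_rfl) ?_ (HasSubset.Subset.eventuallyLE hDQ)
    filter_upwards with w
    positivity
  rw [hs] at hlow
  norm_num at hlow
  linarith

/-! ### Per-cell lower bound -/

lemma cell_lower (Y : Finset E3) (y : E3) :
    (3/5) * ((1:ℝ)/20) ^ ((2:ℝ)/3) * ((volume (vorCell Y y)).toReal) ^ ((5:ℝ)/3)
      ≤ ∫ x in vorCell Y y, dist x y ^ 2 := by
  set V := vorCell Y y with hV
  set v : ℝ := (volume V).toReal with hv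
  have hv0 : 0 ≤ v := ENNReal.toReal_nonneg
  set r : ℝ := (v/20) ^ ((1:ℝ)/3) with hr
  have hr0 : 0 ≤ r := Real.rpow_nonneg (by linarith) _
  have hr3 : r ^ 3 = v / 20 := by
    rw [hr, ← Real.rpow_natCast ((v/20) ^ ((1:ℝ)/3)) 3, ← Real.rpow_mul (by linarith)]
    norm_num
  -- ball volume bound
  have hball : volume (Metric.ball y r) ≤ ENNReal.ofReal (8 * r ^ 3) := by
    have hsub : Metric.ball y r ⊆ {x : E3 | ∀ i, x i ∈ Set.Icc (y i - r) (y i + r)} := by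
      intro z hz i
      have h1 : |z i - y i| ≤ dist z y := coord_le_dist z y i
      have h2 : dist z y < r := Metric.mem_ball.mp hz
      rw [abs_le] at h1
      exact ⟨by linarith [h1.1], by linarith [h1.2]⟩
    calc volume (Metric.ball y r) ≤ volume {x : E3 | ∀ i, x i ∈ Set.Icc (y i - r) (y i + r)} :=
          measure_mono hsub
      _ = ENNReal.ofReal (8 * r ^ 3) := by
          rw [volume_pi_set _ fun _ => measurableSet_Icc]
          simp only [Real.volume_Icc]
          have he : ∀ i : Fin 3, y i + r - (y i - r) = 2 * r := fun i => by ring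
          simp only [he]
          rw [Finset.prod_const, Finset.card_univ, Fintype.card_fin,
            ← ENNReal.ofReal_pow (by linarith)]
          congr 1; ring
  -- measure of V minus ball
  have hkey : v - 8 * r ^ 3 ≤ (volume (V \ Metric.ball y r)).toReal := by
    have hsplit : volume V ≤ volume (V ∩ Metric.ball y r) + volume (V \ Metric.ball y r) :=
      measure_le_inter_add_diff _ _ _
    have hfin1 : volume (V ∩ Metric.ball y r) ≠ ⊤ :=
      (lt_of_le_of_lt (measure_mono Set.inter_subset_left) (volume_vorCell_lt_top Y y)).ne
    have hfin2 : volume (V \ Metric.ball y r) ≠ ⊤ :=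
      (lt_of_le_of_lt (measure_mono Set.diff_subset) (volume_vorCell_lt_top Y y)).ne
    have h1 : v ≤ (volume (V ∩ Metric.ball y r)).toReal + (volume (V \ Metric.ball y r)).toReal := by
      rw [hv, ← ENNReal.toReal_add hfin1 hfin2]
      exact ENNReal.toReal_mono (by simp [hfin1, hfin2]) hsplit
    have h2 : (volume (V ∩ Metric.ball y r)).toReal ≤ 8 * r ^ 3 := by
      have hin : volume (V ∩ Metric.ball y r) ≤ ENNReal.ofReal (8 * r ^ 3) :=
        le_trans (measure_mono Set.inter_subset_right) hball
      calc (volume (V ∩ Metric.ball y r)).toReal ≤ (ENNReal.ofReal (8 * r ^ 3)).toReal :=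
            ENNReal.toReal_mono ENNReal.ofReal_ne_top hin
        _ = 8 * r ^ 3 := ENNReal.toReal_ofReal (by positivity)
    linarith
  -- energy lower bound
  have henergy : r ^ 2 * (v - 8 * r ^ 3) ≤ ∫ x in V, dist x y ^ 2 := by
    have hmb : MeasurableSet (V \ Metric.ball y r) :=
      (measurableSet_vorCell Y y).diff Metric.isOpen_ball.measurableSet
    have hsubQ : V \ Metric.ball y r ⊆ Qcube := fun x hx => vorCell_subset Y y hx.1
    have h1 : r ^ 2 * (volume (V \ Metric.ball y r)).toReal ≤
        ∫ x in V \ Metric.ball y r, dist x y ^ 2 := by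
      refine setIntegral_ge_of_const_le_real hmb
        ((lt_of_le_of_lt (measure_mono Set.diff_subset) (volume_vorCell_lt_top Y y)).ne) ?_
        (integrableOn_distsq y hmb hsubQ)
      intro x hx
      have : r ≤ dist x y := not_lt.mp fun hlt => hx.2 (Metric.mem_ball.mpr hlt)
      nlinarith [dist_nonneg (x := x) (y := y)]
    have h2 : ∫ x in V \ Metric.ball y r, dist x y ^ 2 ≤ ∫ x in V, dist x y ^ 2 := by
      refine setIntegral_mono_set (integrableOn_distsq y (measurableSet_vorCell Y y)
        (vorCell_subset Y y)) ?_ (HasSubset.Subset.eventuallyLE Set.diff_subset)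
      filter_upwards with w
      positivity
    have h3 : r ^ 2 * (v - 8 * r ^ 3) ≤ r ^ 2 * (volume (V \ Metric.ball y r)).toReal := by
      nlinarith [hkey, sq_nonneg r]
    linarith
  -- algebra
  have halg : r ^ 2 * (v - 8 * r ^ 3) = (3/5) * ((1:ℝ)/20) ^ ((2:ℝ)/3) * v ^ ((5:ℝ)/3) := by
    rw [hr3]
    have hr2 : r ^ 2 = v ^ ((2:ℝ)/3) * ((1:ℝ)/20) ^ ((2:ℝ)/3) := by
      rw [hr, ← Real.rpow_natCast ((v/20) ^ ((1:ℝ)/3)) 2, ← Real.rpow_mul (by linarith)]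
      norm_num
      rw [show v / 20 = v * (1/20) by ring, Real.mul_rpow hv0 (by norm_num)]
    rw [hr2]
    have h53 : v ^ ((5:ℝ)/3) = v * v ^ ((2:ℝ)/3) := by
      rw [show (5:ℝ)/3 = 1 + 2/3 by norm_num, Real.rpow_add' hv0 (by norm_num), Real.rpow_one]
    rw [h53]
    ring
  linarith [henergy, halg.symm.le]

/-! ### Jensen / power mean -/

lemma jensen_rpow (F : Finset E3) (v : E3 → ℝ) (hv : ∀ y ∈ F, 0 ≤ v y) (hF : F.Nonempty) :
    (∑ y ∈ F, v y) ^ ((5:ℝ)/3) ≤ (F.card : ℝ) ^ ((2:ℝ)/3) * ∑ y ∈ F, v y ^ ((5:ℝ)/3) := by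
  have hk0 : (0:ℝ) < F.card := by exact_mod_cast Finset.card_pos.mpr hF
  have hjensen := Real.rpow_arith_mean_le_arith_mean_rpow F (fun _ => 1 / (F.card:ℝ)) v
    (fun _ _ => by positivity) (by simp [Finset.sum_const]; field_simp) hv (by norm_num : (1:ℝ) ≤ 5/3)
  simp only [one_div] at hjensen
  rw [← Finset.mul_sum, ← Finset.mul_sum] at hjensen
  rw [Real.mul_rpow (by positivity) (Finset.sum_nonneg hv)] at hjensen
  rw [Real.inv_rpow hk0.le] at hjensen
  have hS0 : 0 ≤ (∑ y ∈ F, v y) ^ ((5:ℝ)/3) := Real.rpow_nonneg (Finset.sum_nonneg hv) _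
  have hk53pos : (0:ℝ) < (F.card:ℝ) ^ ((5:ℝ)/3) := Real.rpow_pos_of_pos hk0 _
  have hk53 : (F.card:ℝ) ^ ((5:ℝ)/3) = (F.card:ℝ) ^ ((2:ℝ)/3) * F.card := by
    rw [show (5:ℝ)/3 = 2/3 + 1 by norm_num, Real.rpow_add hk0, Real.rpow_one]
  calc (∑ y ∈ F, v y) ^ ((5:ℝ)/3)
      = (F.card:ℝ) ^ ((5:ℝ)/3) * (((F.card:ℝ) ^ ((5:ℝ)/3))⁻¹ * (∑ y ∈ F, v y) ^ ((5:ℝ)/3)) := by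
        field_simp
    _ ≤ (F.card:ℝ) ^ ((5:ℝ)/3) * (((F.card:ℝ))⁻¹ * ∑ y ∈ F, v y ^ ((5:ℝ)/3)) :=
        mul_le_mul_of_nonneg_left hjensen hk53pos.le
    _ = (F.card : ℝ) ^ ((2:ℝ)/3) * ∑ y ∈ F, v y ^ ((5:ℝ)/3) := by
        rw [hk53]
        field_simp

/-! ### Frontier of the small cube and slabs -/

lemma frontier_coord {Ω : Set E3} {a : E3} {L : ℝ}
    (hΩ : Ω = {x : E3 | ∀ i, x i ∈ Set.Icc (a i) (a i + L)}) :
    ∀ p ∈ frontier Ω, ∃ i, p i = a i ∨ p i = a i + L := by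
  intro p hp
  have hclosed : IsClosed Ω := hΩ ▸ isClosed_pi_set _ fun i => isClosed_Icc
  have hpΩ : p ∈ Ω := hclosed.frontier_subset hp
  by_contra hcon
  push_neg at hcon
  have hstrict : ∀ i, a i < p i ∧ p i < a i + L := by
    intro i
    have h1 := (hΩ ▸ hpΩ) i
    obtain ⟨hne1, hne2⟩ := hcon i
    exact ⟨lt_of_le_of_ne h1.1 (Ne.symm hne1), lt_of_le_of_ne h1.2 hne2⟩
  set ε : ℝ := Finset.univ.inf' Finset.univ_nonempty
    (fun i => min (p i - a i) (a i + L - p i)) with hε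
  have hε0 : 0 < ε := by
    rw [hε, Finset.lt_inf'_iff]
    intro i _
    obtain ⟨h1, h2⟩ := hstrict i
    exact lt_min (by linarith) (by linarith)
  have hball : Metric.ball p ε ⊆ Ω := by
    intro z hz
    rw [hΩ]
    intro i
    have h1 : |z i - p i| ≤ dist z p := coord_le_dist z p i
    have h2 : dist z p < ε := Metric.mem_ball.mp hz
    have h3 : ε ≤ min (p i - a i) (a i + L - p i) :=
      Finset.inf'_le _ (Finset.mem_univ i)
    rw [abs_le] at h1
    constructor
    · have := le_trans h3 (min_le_left _ _); linarith [h1.1]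
    · have := le_trans h3 (min_le_right _ _); linarith [h1.2]
  have hint : p ∈ interior Ω :=
    mem_interior_iff_mem_nhds.mpr (Filter.mem_of_superset (Metric.ball_mem_nhds p hε0) hball)
  exact hp.2 hint

/-- slab around a face -/
def slab (c : ℝ) (i : Fin 3) : Set E3 :=
  {x | ∀ j, x j ∈ (if j = i then Set.Icc (c - 1/120) (c + 1/120) else Set.Icc (0:ℝ) 1)}

lemma slab_measurable (c : ℝ) (i : Fin 3) : MeasurableSet (slab c i) := by
  refine (isClosed_pi_set _ fun j => ?_).measurableSet
  split <;> exact isClosed_Icc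

lemma slab_volume (c : ℝ) (i : Fin 3) : volume (slab c i) ≤ ENNReal.ofReal (1/60) := by
  rw [slab, volume_pi_set _ fun j => by split <;> exact measurableSet_Icc]
  have : ∀ j : Fin 3, volume (if j = i then Set.Icc (c - 1/120) (c + 1/120)
      else Set.Icc (0:ℝ) 1) = if j = i then ENNReal.ofReal (1/60) else 1 := by
    intro j
    split
    · rw [Real.volume_Icc]; congr 1; ring
    · rw [Real.volume_Icc]; norm_num
  simp only [this]
  rw [Finset.prod_ite_eq' Finset.univ i (fun _ => ENNReal.ofReal (1/60))]
  simp

/-- the union of the six slabs -/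
def slabU (a : E3) (L : ℝ) : Set E3 :=
  (⋃ i, slab (a i) i) ∪ ⋃ i, slab (a i + L) i

lemma slabU_measurable (a : E3) (L : ℝ) : MeasurableSet (slabU a L) :=
  ((MeasurableSet.iUnion fun i => slab_measurable _ i).union
    (MeasurableSet.iUnion fun i => slab_measurable _ i))

lemma slabU_volume (a : E3) (L : ℝ) : volume (slabU a L) ≤ ENNReal.ofReal (1/10) := by
  have h1 : volume (⋃ i, slab (a i) i) ≤ 3 * ENNReal.ofReal (1/60) := by
    refine le_trans (measure_iUnion_le _) ?_
    calc ∑' i : Fin 3, volume (slab (a i) i) ≤ ∑' _i : Fin 3, ENNReal.ofReal (1/60) :=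
          ENNReal.tsum_le_tsum fun i => slab_volume _ i
      _ = 3 * ENNReal.ofReal (1/60) := by
          rw [tsum_fintype]
          simp [Finset.sum_const, Finset.card_univ]
  have h2 : volume (⋃ i, slab (a i + L) i) ≤ 3 * ENNReal.ofReal (1/60) := by
    refine le_trans (measure_iUnion_le _) ?_
    calc ∑' i : Fin 3, volume (slab (a i + L) i) ≤ ∑' _i : Fin 3, ENNReal.ofReal (1/60) :=
          ENNReal.tsum_le_tsum fun i => slab_volume _ i
      _ = 3 * ENNReal.ofReal (1/60) := by
          rw [tsum_fintype]
          simp [Finset.sum_const, Finset.card_univ]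
  calc volume (slabU a L) ≤ volume (⋃ i, slab (a i) i) + volume (⋃ i, slab (a i + L) i) :=
        measure_union_le _ _
    _ ≤ 3 * ENNReal.ofReal (1/60) + 3 * ENNReal.ofReal (1/60) := add_le_add h1 h2
    _ = ENNReal.ofReal (1/10) := by
        have h3 : (3:ENNReal) * ENNReal.ofReal (1/60) = ENNReal.ofReal (1/20) := by
          rw [← ENNReal.ofReal_ofNat 3, ← ENNReal.ofReal_mul (by norm_num)]
          norm_num
        rw [h3, ← ENNReal.ofReal_add (by norm_num) (by norm_num)]
        norm_num


/-! ### Numeric constants -/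

lemma omega3_pos : (0:ℝ) < omega3 := by
  unfold omega3
  positivity

lemma const_ineq : (Real.pi/5) * omega3 ^ (-(5:ℝ)/3)
    ≤ (3/5) * ((1:ℝ)/20) ^ ((2:ℝ)/3) * ((9:ℝ)/10) ^ ((5:ℝ)/3) := by
  have hω := omega3_pos
  have hπ := Real.pi_pos
  refine le_of_pow_le_pow_left₀ (n := 3) (by norm_num) (by positivity) ?_
  have c1 : (omega3 ^ (-(5:ℝ)/3)) ^ (3:ℕ) = (omega3 ^ (5:ℕ))⁻¹ := by
    rw [← Real.rpow_natCast (omega3 ^ (-(5:ℝ)/3)) 3, ← Real.rpow_mul hω.le]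
    rw [show (-(5:ℝ)/3 * (3:ℕ)) = -(5:ℝ) by push_cast; ring]
    rw [Real.rpow_neg hω.le, show ((5:ℝ)) = ((5:ℕ):ℝ) by norm_num, Real.rpow_natCast]
  have c2 : (((1:ℝ)/20) ^ ((2:ℝ)/3)) ^ (3:ℕ) = ((1:ℝ)/20) ^ (2:ℕ) := by
    rw [← Real.rpow_natCast (((1:ℝ)/20) ^ ((2:ℝ)/3)) 3, ← Real.rpow_mul (by norm_num)]
    rw [show ((2:ℝ)/3 * (3:ℕ)) = ((2:ℕ):ℝ) by push_cast; ring, Real.rpow_natCast]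
  have c3 : (((9:ℝ)/10) ^ ((5:ℝ)/3)) ^ (3:ℕ) = ((9:ℝ)/10) ^ (5:ℕ) := by
    rw [← Real.rpow_natCast (((9:ℝ)/10) ^ ((5:ℝ)/3)) 3, ← Real.rpow_mul (by norm_num)]
    rw [show ((5:ℝ)/3 * (3:ℕ)) = ((5:ℕ):ℝ) by push_cast; ring, Real.rpow_natCast]
  rw [mul_pow, mul_pow, mul_pow, c1, c2, c3]
  rw [show omega3 = 4 * Real.pi / 3 from rfl]
  have h45 : (0:ℝ) < (4 * Real.pi / 3) ^ (5:ℕ) := by positivity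
  rw [mul_inv_le_iff₀ h45]
  have hπ1 : 3.141592 < Real.pi := Real.pi_gt_d6
  nlinarith [sq_nonneg Real.pi, sq_nonneg (Real.pi - 3.141592), Real.pi_pos,
    pow_pos Real.pi_pos 3, pow_pos Real.pi_pos 5]

lemma Gamma5_pos : 0 < Gamma5 := by
  unfold Gamma5
  have h1 : (1:ℝ) < Real.sqrt (1 + (2 ^ 4 * 3 ^ 3 : ℝ) / (5 ^ 2 * 10 ^ 3)) := by
    rw [show (1:ℝ) = Real.sqrt 1 by simp]
    exact Real.sqrt_lt_sqrt (by norm_num) (by norm_num)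
  have h2 : 0 < Gamma3 := by
    unfold Gamma3
    exact mul_pos (Real.rpow_pos_of_pos omega3_pos _)
      (Real.rpow_pos_of_pos (by unfold Gamma1; positivity) _)
  nlinarith

lemma Bterm_nonneg (n : ℕ) : 0 ≤ 3 * Gamma4 ^ 6 / (4 * Gamma5 ^ 3) * (n : ℝ)⁻¹ := by
  have h5 := Gamma5_pos
  have : (0:ℝ) ≤ Gamma4 ^ 6 := by positivity
  positivity

open scoped Classical in
theorem stmt_14 (Ω : Set E3) (a : E3) (L : ℝ) (hL : 0 < L)
    (hΩ : Ω = {x : E3 | ∀ i, x i ∈ Set.Icc (a i) (a i + L)}) (hΩQ : Ω ⊆ Qcube) :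
    ∀ᶠ n : ℕ in Filter.atTop, ∀ Y : Finset E3, IsMinimizer n Y →
      (∑ y ∈ Y.filter (fun y => ¬(vorCell Y y ∩ frontier Ω).Nonempty),
          ∫ x in vorCell Y y, dist x y ^ 2) ≥
        (Real.pi / 5) * omega3 ^ (-(5 : ℝ) / 3) * (n : ℝ) ^ (-(2 : ℝ) / 3) -
          (3 * Gamma4 ^ 6 / (4 * Gamma5 ^ 3)) * (n : ℝ)⁻¹ := by
  rw [Filter.eventually_atTop]
  refine ⟨10 ^ 24, fun n hn Y hY => ?_⟩
  have hcard := hY.2.1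
  have hn1 : 0 < n := lt_of_lt_of_le (by norm_num) hn
  have hYne : Y.Nonempty := Finset.card_pos.mp (by rw [hcard]; exact hn1)
  have hE := minimizer_energy_le hY hn
  have hcov := covering_radius hYne hE
  set F := Y.filter (fun y => ¬(vorCell Y y ∩ frontier Ω).Nonempty) with hF
  -- cell radius bound
  have hcell : ∀ y, ∀ x ∈ vorCell Y y, dist x y ≤ 1/240 := by
    intro y x hx
    obtain ⟨z, hz, hdz⟩ := hcov x hx.1
    exact le_trans (hx.2 z hz) hdz
  -- touching cells lie in the slabs
  have htouch : ∀ y, (vorCell Y y ∩ frontier Ω).Nonempty → vorCell Y y ⊆ slabU a L := by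
    rintro y ⟨p, hpc, hpf⟩ x hx
    obtain ⟨i, hpi⟩ := frontier_coord hΩ p hpf
    have hdxp : dist x p ≤ 1/120 := by
      have h1 : dist x p ≤ dist x y + dist y p := dist_triangle _ _ _
      have h2 : dist y p = dist p y := dist_comm _ _
      have h3 := hcell y x hx
      have h4 := hcell y p hpc
      rw [h2] at h1
      linarith
    have hco : |x i - p i| ≤ 1/120 := le_trans (coord_le_dist x p i) hdxp
    rw [abs_le] at hco
    rcases hpi with hc | hc
    · refine Set.mem_union_left _ (Set.mem_iUnion.mpr ⟨i, ?_⟩)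
      intro j
      by_cases hj : j = i
      · subst hj
        rw [if_pos rfl, ← hc]
        exact ⟨by linarith [hco.1], by linarith [hco.2]⟩
      · rw [if_neg hj]
        exact hx.1 j
    · refine Set.mem_union_right _ (Set.mem_iUnion.mpr ⟨i, ?_⟩)
      intro j
      by_cases hj : j = i
      · subst hj
        rw [if_pos rfl, ← hc]
        exact ⟨by linarith [hco.1], by linarith [hco.2]⟩
      · rw [if_neg hj]
        exact hx.1 j
  -- coverage of complement of slabs by non-touching cells
  have hQsub : Qcube \ slabU a L ⊆ ⋃ y ∈ F, vorCell Y y := by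
    intro x hx
    obtain ⟨z, hzY, hzmin⟩ := Y.exists_min_image (fun z => dist x z) hYne
    have hxz : x ∈ vorCell Y z := ⟨hx.1, fun w hw => hzmin w hw⟩
    have hzF : z ∈ F := by
      rw [hF, Finset.mem_filter]
      exact ⟨hzY, fun hne => hx.2 (htouch z hne hxz)⟩
    exact Set.mem_biUnion hzF hxz
  -- volume lower bound
  have hVsum : (9:ℝ)/10 ≤ ∑ y ∈ F, (volume (vorCell Y y)).toReal := by
    have h1 : ENNReal.ofReal (9/10) ≤ volume (Qcube \ slabU a L) := by
      have ha : ENNReal.ofReal (9/10) ≤ volume Qcube - volume (slabU a L) := by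
        rw [volume_Qcube]
        calc ENNReal.ofReal (9/10) = 1 - ENNReal.ofReal (1/10) := by
              rw [← ENNReal.ofReal_one, ← ENNReal.ofReal_sub _ (by norm_num)]
              norm_num
          _ ≤ 1 - volume (slabU a L) := tsub_le_tsub le_rfl (slabU_volume a L)
      exact le_trans ha le_measure_diff
    have h2 : volume (Qcube \ slabU a L) ≤ ∑ y ∈ F, volume (vorCell Y y) :=
      le_trans (measure_mono hQsub) (measure_biUnion_finset_le F _)
    have hfin : ∀ y ∈ F, volume (vorCell Y y) ≠ ⊤ := fun y _ => (volume_vorCell_lt_top Y y).ne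
    have h3 : (ENNReal.ofReal (9/10)).toReal ≤ (∑ y ∈ F, volume (vorCell Y y)).toReal :=
      ENNReal.toReal_mono (ENNReal.sum_ne_top.mpr hfin) (le_trans h1 h2)
    rw [ENNReal.toReal_ofReal (by norm_num), ENNReal.toReal_sum hfin] at h3
    exact h3
  have hFne : F.Nonempty := by
    rcases Finset.eq_empty_or_nonempty F with h | h
    · rw [h] at hVsum; simp at hVsum; linarith
    · exact h
  -- sum of energies
  set c : ℝ := (3/5) * ((1:ℝ)/20) ^ ((2:ℝ)/3) with hc
  have hc0 : 0 < c := by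
    rw [hc]
    have := Real.rpow_pos_of_pos (show (0:ℝ) < 1/20 by norm_num) ((2:ℝ)/3)
    positivity
  set v : E3 → ℝ := fun y => (volume (vorCell Y y)).toReal with hv
  have hv0 : ∀ y ∈ F, 0 ≤ v y := fun y _ => ENNReal.toReal_nonneg
  have hstep1 : c * ∑ y ∈ F, v y ^ ((5:ℝ)/3) ≤ ∑ y ∈ F, ∫ x in vorCell Y y, dist x y ^ 2 := by
    rw [Finset.mul_sum]
    exact Finset.sum_le_sum fun y _ => cell_lower Y y
  have hjen := jensen_rpow F v hv0 hFne
  have hS : ((9:ℝ)/10) ^ ((5:ℝ)/3) ≤ (∑ y ∈ F, v y) ^ ((5:ℝ)/3) :=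
    Real.rpow_le_rpow (by norm_num) hVsum (by norm_num)
  have hkpos : (0:ℝ) < (F.card : ℝ) := by exact_mod_cast Finset.card_pos.mpr hFne
  have hkn : (F.card : ℝ) ≤ (n : ℝ) := by
    have : F.card ≤ Y.card := Finset.card_filter_le _ _
    exact_mod_cast le_trans this (le_of_eq hcard)
  have hk23 : (F.card : ℝ) ^ ((2:ℝ)/3) ≤ (n : ℝ) ^ ((2:ℝ)/3) :=
    Real.rpow_le_rpow hkpos.le hkn (by norm_num)
  have hn23pos : (0:ℝ) < (n : ℝ) ^ ((2:ℝ)/3) :=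
    Real.rpow_pos_of_pos (by exact_mod_cast hn1) _
  have hk23pos : (0:ℝ) < (F.card : ℝ) ^ ((2:ℝ)/3) := Real.rpow_pos_of_pos hkpos _
  have hT0 : 0 ≤ ∑ y ∈ F, v y ^ ((5:ℝ)/3) :=
    Finset.sum_nonneg fun y hy => Real.rpow_nonneg (hv0 y hy) _
  have hstep2 : ((9:ℝ)/10) ^ ((5:ℝ)/3) * ((n:ℝ) ^ ((2:ℝ)/3))⁻¹ ≤ ∑ y ∈ F, v y ^ ((5:ℝ)/3) := by
    have h1 : ((9:ℝ)/10) ^ ((5:ℝ)/3) ≤ (n : ℝ) ^ ((2:ℝ)/3) * ∑ y ∈ F, v y ^ ((5:ℝ)/3) := by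
      calc ((9:ℝ)/10) ^ ((5:ℝ)/3) ≤ (∑ y ∈ F, v y) ^ ((5:ℝ)/3) := hS
        _ ≤ (F.card : ℝ) ^ ((2:ℝ)/3) * ∑ y ∈ F, v y ^ ((5:ℝ)/3) := hjen
        _ ≤ (n : ℝ) ^ ((2:ℝ)/3) * ∑ y ∈ F, v y ^ ((5:ℝ)/3) :=
            mul_le_mul_of_nonneg_right hk23 hT0
    rw [mul_inv_le_iff₀ hn23pos]
    linarith [h1]
  -- final chain
  have hA : (Real.pi / 5) * omega3 ^ (-(5:ℝ)/3) * (n:ℝ) ^ (-(2:ℝ)/3)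
      ≤ ∑ y ∈ F, ∫ x in vorCell Y y, dist x y ^ 2 := by
    have hneg : (n:ℝ) ^ (-(2:ℝ)/3) = ((n:ℝ) ^ ((2:ℝ)/3))⁻¹ := by
      rw [show (-(2:ℝ)/3) = -((2:ℝ)/3) by ring, Real.rpow_neg (by positivity)]
    calc (Real.pi / 5) * omega3 ^ (-(5:ℝ)/3) * (n:ℝ) ^ (-(2:ℝ)/3)
        ≤ (c * ((9:ℝ)/10) ^ ((5:ℝ)/3)) * (n:ℝ) ^ (-(2:ℝ)/3) := by
          refine mul_le_mul_of_nonneg_right ?_ (Real.rpow_nonneg (by positivity) _)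
          calc (Real.pi / 5) * omega3 ^ (-(5:ℝ)/3)
              ≤ (3/5) * ((1:ℝ)/20) ^ ((2:ℝ)/3) * ((9:ℝ)/10) ^ ((5:ℝ)/3) := const_ineq
            _ = c * ((9:ℝ)/10) ^ ((5:ℝ)/3) := by rw [hc]
      _ = c * (((9:ℝ)/10) ^ ((5:ℝ)/3) * ((n:ℝ) ^ ((2:ℝ)/3))⁻¹) := by
          rw [hneg]; ring
      _ ≤ c * ∑ y ∈ F, v y ^ ((5:ℝ)/3) := mul_le_mul_of_nonneg_left hstep2 hc0.le
      _ ≤ ∑ y ∈ F, ∫ x in vorCell Y y, dist x y ^ 2 := hstep1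
  have hB := Bterm_nonneg n
  rw [ge_iff_le]
  calc (Real.pi / 5) * omega3 ^ (-(5:ℝ)/3) * (n:ℝ) ^ (-(2:ℝ)/3)
        - 3 * Gamma4 ^ 6 / (4 * Gamma5 ^ 3) * (n:ℝ)⁻¹
      ≤ (Real.pi / 5) * omega3 ^ (-(5:ℝ)/3) * (n:ℝ) ^ (-(2:ℝ)/3) := by linarith
    _ ≤ _ := hA
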